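/- If a word w 12-represents a labeled graph G = ({1,…,n}, E) and w contains an occurrence of a letter j strictly between two other occurrences of j (i.e., w = A j B j C with A, C containing no j and some occurrence of j inside B), then the word obtained by deleting all occurrences of j in B still 12-represents G. -/

import Mathlib

/-- A word has no 12-match iff no two consecutive letters form a strictly
increasing pair, i.e. the word is weakly decreasing at each step. -/
def NoMatch12 (w : List ℕ) : Prop := w.Chain' (fun a b => b ≤ a)

/-- `w` 12-represents the labeled graph with vertex set `V ⊂ ℕ` and edge relation
`E`: every vertex occurs in `w`, all letters of `w` are vertices, and for all
distinct vertices `x, y`: `xy` is an edge iff the subsequence of `w` consisting of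
occurrences of `x` and `y` has no 12-match. -/
def Rep12 (V : Finset ℕ) (E : ℕ → ℕ → Prop) (w : List ℕ) : Prop :=
  (∀ v ∈ V, v ∈ w) ∧ (∀ a ∈ w, a ∈ V) ∧
    ∀ x ∈ V, ∀ y ∈ V, x ≠ y →
      (E x y ↔ NoMatch12 (w.filter (fun a => a = x ∨ a = y)))

namespace Stmt5Aux
open List

lemma dupMid {r : ℕ → ℕ → Prop} (P l : List ℕ) (x : ℕ)
    (h : List.Pairwise r (P ++ x :: l)) (hx : r x x) :
    List.Pairwise r (P ++ x :: x :: l) := by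
  rw [List.pairwise_append] at h ⊢
  obtain ⟨h1, h2, h3⟩ := h
  rw [List.pairwise_cons] at h2
  refine ⟨h1, ?_, ?_⟩
  · rw [List.pairwise_cons]
    exact ⟨fun b hb => by rcases List.mem_cons.mp hb with rfl | hb; exact hx; exact h2.1 b hb,
      List.pairwise_cons.mpr h2⟩
  · intro a ha b hb
    rcases List.mem_cons.mp hb with rfl | hb
    · exact h3 a ha b List.mem_cons_self
    · exact h3 a ha b hb

lemma sub1 (P Q M : List ℕ) (j a : ℕ) (ha : a ∈ M) :
    [j, a] <+ P ++ j :: (M ++ j :: Q) := by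
  refine List.Sublist.trans ?_ (List.sublist_append_right P _)
  exact List.Sublist.cons₂ j (((List.singleton_sublist.mpr ha).trans
    (List.sublist_append_left M (j :: Q))))

lemma sub2 (P Q M : List ℕ) (j a : ℕ) (ha : a ∈ M) :
    [a, j] <+ P ++ j :: (M ++ j :: Q) := by
  refine List.Sublist.trans ?_ (List.sublist_append_right P _)
  refine List.Sublist.cons j ?_
  exact List.Sublist.append (List.singleton_sublist.mpr ha)
    ((List.singleton_sublist.mpr (List.mem_cons_self (a := j) (l := Q))))

/-- Key combinatorial fact: deleting all `j`'s strictly between two fixed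
occurrences of `j` does not change whether the word is weakly decreasing. -/
lemma key (P Q M : List ℕ) (j : ℕ) :
    NoMatch12 (P ++ j :: M ++ j :: Q) ↔
      NoMatch12 (P ++ j :: M.filter (fun a => a ≠ j) ++ j :: Q) := by
  unfold NoMatch12
  simp only [List.append_assoc, List.cons_append]
  unfold List.Chain'
  rw [List.isChain_iff_pairwise, List.isChain_iff_pairwise]
  constructor
  · intro h
    have hMj : ∀ a ∈ M, a = j := fun a ha =>
      le_antisymm (List.pairwise_iff_forall_sublist.mp h (sub1 P Q M j a ha))
        (List.pairwise_iff_forall_sublist.mp h (sub2 P Q M j a ha))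
    have hfil : M.filter (fun a => a ≠ j) = [] := by
      rw [List.filter_eq_nil_iff]
      intro a ha
      simp [hMj a ha]
    rw [hfil]
    refine h.sublist ?_
    refine List.Sublist.append_left ?_ P
    simp only [List.nil_append]
    exact List.Sublist.cons₂ j ((List.sublist_append_right M (j :: Q)))
  · intro h
    have hMj : ∀ a ∈ M, a = j := by
      intro a ha
      by_contra hne
      have haf : a ∈ M.filter (fun a => a ≠ j) := List.mem_filter.mpr ⟨ha, by simp [hne]⟩
      have h1 := List.pairwise_iff_forall_sublist.mp h (sub1 P Q _ j a haf)
      have h2 := List.pairwise_iff_forall_sublist.mp h (sub2 P Q _ j a haf)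
      exact hne (le_antisymm h1 h2)
    have hrep : M = List.replicate M.length j := by
      rw [List.eq_replicate_length]; exact hMj
    have hfil : M.filter (fun a => a ≠ j) = [] := by
      rw [List.filter_eq_nil_iff]
      intro a ha
      simp [hMj a ha]
    rw [hfil] at h
    rw [hrep]
    induction M.length with
    | zero => simpa using h
    | succ k ih =>
        have heq : P ++ j :: (List.replicate (k + 1) j ++ j :: Q) =
            P ++ j :: j :: (List.replicate k j ++ j :: Q) := by
          simp [List.replicate_succ]
        rw [heq]
        exact dupMid P _ j ih le_rfl

end Stmt5Aux

/-- if `w = A j B j C` with `A, C` containing no `j` and some `j`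
inside `B`, then deleting all occurrences of `j` in `B` preserves
12-representation. -/
theorem stmt_5 (n : ℕ) (E : ℕ → ℕ → Prop) (A B C : List ℕ) (j : ℕ)
    (hA : j ∉ A) (hC : j ∉ C) (hB : j ∈ B)
    (h : Rep12 (Finset.Icc 1 n) E (A ++ j :: B ++ j :: C)) :
    Rep12 (Finset.Icc 1 n) E (A ++ j :: (B.filter (fun a => a ≠ j)) ++ j :: C) := by
  obtain ⟨h1, h2, h3⟩ := h
  refine ⟨?_, ?_, ?_⟩
  · intro v hv
    have := h1 v hv
    simp only [List.mem_append, List.mem_cons, List.mem_filter, decide_eq_true_eq] at this ⊢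
    by_cases hvj : v = j
    · tauto
    · tauto
  · intro a ha
    apply h2
    simp only [List.mem_append, List.mem_cons, List.mem_filter, decide_eq_true_eq] at ha ⊢
    tauto
  · intro x hx y hy hxy
    rw [h3 x hx y hy hxy]
    by_cases hj : j = x ∨ j = y
    · have hcomm : (B.filter (fun a => a ≠ j)).filter (fun a => a = x ∨ a = y)
          = (B.filter (fun a => a = x ∨ a = y)).filter (fun a => a ≠ j) :=
        List.filter_comm _ _ _
      simp only [List.filter_append, List.filter_cons, hj, decide_eq_true_eq, if_pos,
        decide_true, ite_true]
      rw [hcomm]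
      exact Stmt5Aux.key _ _ _ _
    · push_neg at hj
      have hB' : (B.filter (fun a => a ≠ j)).filter (fun a => a = x ∨ a = y)
          = B.filter (fun a => a = x ∨ a = y) := by
        rw [List.filter_filter]
        apply List.filter_congr
        intro a _
        by_cases hax : a = x ∨ a = y
        · have : a ≠ j := by rintro rfl; tauto
          simp [hax, this]
        · simp [hax]
      have hjf : (decide (j = x ∨ j = y)) = false := by simp [hj.1, hj.2]
      simp only [List.filter_append, List.filter_cons, hjf, Bool.false_eq_true, if_false]
      rw [hB']
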